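/- In a nonempty ascending Gauss code w with labels numbered 1,…,n in order of first appearance, let u be the label whose second occurrence appears earliest in w. Then the prefix of w up to and including that second occurrence has the form 1^{-1} 2^{-1} … u^{-1} … v^{-1} u^{+1} for some v with u ≤ v ≤ n; i.e., all letters strictly between the first occurrence of u and the second occurrence of u are first (under) occurrences of the consecutive labels u+1,…,v. -/

import Mathlib

/-- A Gauss code over natural-number labels with signs in `ℤ`. -/
abbrev GaussCode (α : Type) : Type := List (α × ℤ)

/-- Ascending: every label occurs first with sign `-1` and second with sign `+1`. -/
def IsAscending {α : Type} [DecidableEq α] (w : GaussCode α) : Prop :=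
  ∀ x ∈ w.map Prod.fst, w.filter (fun p => decide (p.1 = x)) = [(x, -1), (x, 1)]

/-- The list of labels in order of first appearance. -/
def firstOccs {α : Type} [DecidableEq α] : List α → List α
  | [] => []
  | a :: l => a :: firstOccs (l.filter (fun b => decide (b ≠ a)))
  termination_by l => l.length
  decreasing_by simpa using Nat.lt_succ_of_le ((List.length_filter_le _ l.attach).trans_eq List.length_attach)

/-- Position `i` of the code is a second occurrence of its label. -/
def isSecondOcc (w : GaussCode ℕ) (i : ℕ) : Prop :=
  ∃ p, w[i]? = some p ∧ ((w.take i).map Prod.fst).count p.1 = 1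

theorem gc_count_eq_filter_length (l : GaussCode ℕ) (x : ℕ) :
    (l.map Prod.fst).count x = (l.filter (fun p => decide (p.1 = x))).length := by
  induction l with
  | nil => simp
  | cons a l ih => by_cases h : a.1 = x <;> simp [List.count_cons, h, ih]

theorem take_range'_one (k n : ℕ) (h : k ≤ n) :
    (List.range' 1 n).take k = List.range' 1 k := by
  have h2 := List.range'_append (s := 1) (m := k) (n := n - k) (step := 1)
  rw [show n = k + (n - k) by omega, ← h2, List.take_left' (by simp)]

theorem firstOccs_take {α : Type} [DecidableEq α] :
    ∀ (l : List α) (k : ℕ), k ≤ l.length → (l.take k).Nodup →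
      (firstOccs l).take k = l.take k
  | [], k, hk, _ => by simp [firstOccs]
  | _, 0, _, _ => by simp
  | a :: l, k+1, hk, hnd => by
    rw [firstOccs]
    simp only [List.take_succ_cons] at hnd ⊢
    have hk' : k ≤ l.length := Nat.succ_le_succ_iff.mp (by simpa using hk)
    have ha : a ∉ l.take k := (List.nodup_cons.mp hnd).1
    have hnd' : (l.take k).Nodup := (List.nodup_cons.mp hnd).2
    have hlt : k = (l.take k).length := by simp [hk']
    have hsplit : l.filter (fun b => decide (b ≠ a)) =
        l.take k ++ (l.drop k).filter (fun b => decide (b ≠ a)) := by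
      conv_lhs => rw [← List.take_append_drop k l]
      rw [List.filter_append, List.filter_eq_self.mpr]
      intro b hb
      simp only [decide_eq_true_eq]
      exact fun hba => ha (hba ▸ hb)
    have htk : (l.filter (fun b => decide (b ≠ a))).take k = l.take k := by
      rw [hsplit, List.take_left' hlt.symm]
    have hrec := firstOccs_take (l.filter (fun b => decide (b ≠ a))) k
      (by rw [hsplit]; simp [hlt.symm]) (by rw [htk]; exact hnd')
    rw [hrec, htk]
  termination_by l _ => l.length
  decreasing_by simpa using Nat.lt_succ_of_le (List.length_filter_le _ l)

/-- in a nonempty ascending Gauss code whose labels are numbered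
`1, …, n` in order of first appearance, if `i` is the earliest position which is a
second occurrence (of label `u`), then the prefix up to and including position `i`
reads `1⁻¹ 2⁻¹ … v⁻¹ u⁺¹` for some `v` with `u ≤ v ≤ n`. -/
theorem ascending_prefix_form (w : GaussCode ℕ) (n i u : ℕ)
    (hasc : IsAscending w)
    (hnum : firstOccs (w.map Prod.fst) = List.range' 1 n)
    (hne : w ≠ [])
    (hi : isSecondOcc w i) (hmin : ∀ j < i, ¬ isSecondOcc w j)
    (hu : ∃ s : ℤ, w[i]? = some (u, s)) :
    ∃ v, u ≤ v ∧ v ≤ n ∧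
      w.take (i + 1) =
        ((List.range' 1 v).map fun k => ((k : ℕ), (-1 : ℤ))) ++ [(u, 1)] := by
  obtain ⟨s, hs⟩ := hu
  obtain ⟨hilen, hwi⟩ := List.getElem?_eq_some_iff.mp hs
  -- every label appearing in w has total count 2
  have hcnt2 : ∀ j, (hj : j < w.length) → (w.map Prod.fst).count (w[j].1) = 2 := by
    intro j hj
    rw [gc_count_eq_filter_length,
      hasc (w[j].1) (List.mem_map.mpr ⟨w[j], List.getElem_mem hj, rfl⟩)]
    rfl
  -- positions before i are first occurrences
  have hzero : ∀ j, (hj : j < i) →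
      ((w.take j).map Prod.fst).count ((w[j]'(lt_trans hj hilen)).1) = 0 := by
    intro j hj
    have hjlen : j < w.length := lt_trans hj hilen
    have hne1 : ((w.take j).map Prod.fst).count (w[j].1) ≠ 1 := fun h1 =>
      hmin j hj ⟨w[j], List.getElem?_eq_some_iff.mpr ⟨hjlen, rfl⟩, h1⟩
    have hle : ((w.take (j+1)).map Prod.fst).count (w[j].1) ≤ 2 := by
      rw [← hcnt2 j hjlen]
      exact ((List.take_sublist _ _).map _).count_le _
    have hts : w.take (j+1) = w.take j ++ [w[j]] := by
      rw [List.take_succ, List.getElem?_eq_getElem hjlen]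
      rfl
    rw [hts] at hle
    simp only [List.map_append, List.count_append, List.map_cons, List.map_nil,
      List.count_cons, List.count_nil, beq_self_eq_true, if_pos] at hle
    omega
  -- the prefix of length k reads 1,…,k
  have key : ∀ k, k ≤ i → ((w.take k).map Prod.fst) = List.range' 1 k ∧ k ≤ n := by
    intro k
    induction k with
    | zero => exact fun _ => ⟨by simp, Nat.zero_le n⟩
    | succ k ih =>
      intro hk1
      obtain ⟨ihk, _⟩ := ih (le_trans (Nat.le_succ k) hk1)
      have hki : k < i := Nat.lt_of_lt_of_le (Nat.lt_succ_self k) hk1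
      have hklen : k < w.length := lt_trans hki hilen
      have hz := hzero k hki
      have hnotmem : w[k].1 ∉ List.range' 1 k := by
        rw [← ihk]
        exact List.count_eq_zero.mp hz
      have hts : w.take (k+1) = w.take k ++ [w[k]] := by
        rw [List.take_succ, List.getElem?_eq_getElem hklen]
        rfl
      have hmapk1 : (w.take (k+1)).map Prod.fst = List.range' 1 k ++ [w[k].1] := by
        rw [hts, List.map_append, ihk]
        rfl
      have hnd : ((w.map Prod.fst).take (k+1)).Nodup := by
        rw [← List.map_take, hmapk1]
        simp only [List.nodup_append, List.nodup_cons, List.nodup_nil]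
        refine ⟨List.nodup_range', ⟨by simp, trivial⟩, ?_⟩
        intro a ha b hb
        simp only [List.mem_singleton] at hb
        subst hb
        exact fun hab => hnotmem (hab ▸ ha)
      have hfo := firstOccs_take (w.map Prod.fst) (k+1)
        (by simpa using (Nat.le_of_lt (lt_of_le_of_lt hk1 hilen))) hnd
      rw [hnum] at hfo
      have hlen2 : k + 1 ≤ n := by
        have hl := congrArg List.length hfo
        simp only [List.length_take, List.length_range', List.length_map] at hl
        omega
      refine ⟨?_, hlen2⟩
      rw [List.map_take, ← hfo, take_range'_one _ _ hlen2]
  obtain ⟨hmapi, hin⟩ := key i le_rfl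
  -- the label u and its count
  have hcu : ((w.take i).map Prod.fst).count u = 1 := by
    obtain ⟨p, hp, hc⟩ := hi
    have : p = (u, s) := Option.some.inj (hp.symm.trans hs)
    rw [this] at hc
    exact hc
  have humem : u ∈ List.range' 1 i := by
    rw [← hmapi]
    exact List.count_pos_iff.mp (by omega)
  have hui : 1 ≤ u ∧ u < 1 + i := List.mem_range'_1.mp humem
  -- decomposition of w at a position
  have hdecomp : ∀ j, (hj : j < w.length) → w = w.take j ++ w[j] :: w.drop (j+1) := by
    intro j hj
    conv_lhs => rw [← List.take_append_drop j w]
    rw [List.drop_eq_getElem_cons hj]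
  have hsplitF : ∀ (P : ℕ × ℤ → Bool) j, (hj : j < w.length) →
      w.filter P = (w.take j).filter P ++ ((w[j]'hj) :: w.drop (j+1)).filter P := by
    intro P j hj
    conv_lhs => rw [hdecomp j hj]
    rw [List.filter_append]
  -- sign at position i is +1
  have hs1 : s = 1 := by
    have humw : u ∈ w.map Prod.fst := List.mem_map.mpr ⟨(u, s), hwi ▸ List.getElem_mem hilen, rfl⟩
    have hfw := hasc u humw
    have hsp := hsplitF (fun p => decide (p.1 = u)) i hilen
    rw [hwi, List.filter_cons] at hsp
    simp only [decide_true, if_pos] at hsp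
    have hlen1 : ((w.take i).filter (fun p => decide (p.1 = u))).length = 1 := by
      rw [← gc_count_eq_filter_length]; exact hcu
    obtain ⟨a, ha⟩ := List.length_eq_one_iff.mp hlen1
    have hcomb := hfw.symm.trans hsp
    rw [ha] at hcomb
    simp only [List.cons_append, List.nil_append, List.cons.injEq, Prod.mk.injEq] at hcomb
    exact hcomb.2.1.2.symm
  -- signs before i are -1
  have hsign : ∀ j, (hj : j < i) →
      w[j]'(lt_trans hj hilen) = ((w[j]'(lt_trans hj hilen)).1, -1) := by
    intro j hj
    have hjlen : j < w.length := lt_trans hj hilen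
    have hxmw : w[j].1 ∈ w.map Prod.fst := List.mem_map.mpr ⟨w[j], List.getElem_mem hjlen, rfl⟩
    have hfw := hasc (w[j].1) hxmw
    have hnil : (w.take j).filter (fun p => decide (p.1 = w[j].1)) = [] := by
      apply List.eq_nil_of_length_eq_zero
      rw [← gc_count_eq_filter_length]
      exact hzero j hj
    have hsp := hsplitF (fun p => decide (p.1 = w[j].1)) j hjlen
    rw [hnil, List.filter_cons] at hsp
    simp only [decide_true, if_pos, List.nil_append] at hsp
    have hcomb := hfw.symm.trans hsp
    simp only [List.cons.injEq] at hcomb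
    exact hcomb.1.symm
  -- the prefix as pairs
  have htake : w.take i = (List.range' 1 i).map (fun k => ((k : ℕ), (-1 : ℤ))) := by
    apply List.ext_getElem
    · simp [Nat.le_of_lt hilen]
    · intro j h1 h2
      have hj : j < i := by simpa using h2
      have hjlen : j < w.length := lt_trans hj hilen
      rw [List.getElem_take, List.getElem_map, List.getElem_range']
      have hfst : w[j].1 = 1 + 1 * j := by
        have hgl := List.getElem_of_eq hmapi (show j < ((w.take i).map Prod.fst).length by
          simpa [Nat.le_of_lt hilen] using hj)
        rw [List.getElem_map, List.getElem_take, List.getElem_range'] at hgl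
        exact hgl
      rw [hsign j hj, hfst]
  -- conclusion
  refine ⟨i, by omega, hin, ?_⟩
  rw [List.take_succ, hs, htake]
  simp [hs1]
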